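/- If Θ is a compact topological space and θ ↦ F_{X_θ}^k(η) is continuous in θ for every η ∈ ℝ, then a maximal element exists with respect to the k-th order stochastic dominance partial preorder, i.e., there exists θ* ∈ Θ such that no θ ∈ Θ with X_θ strictly dominating X_{θ*} exists. -/
import Mathlib

open MeasureTheory Set

/-- Proposition 1: over a compact parameter space with
`θ ↦ F_{X_θ}^k(η)` continuous for every `η`, a maximal element for the k-th order
stochastic dominance preorder exists: some `θ*` such that any `θ` dominating `θ*`
has the same k-th distribution function. -/
theorem exists_nondominated_solution
    {Θ Ω : Type*} [TopologicalSpace Θ] [CompactSpace Θ] [Nonempty Θ]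
    [MeasurableSpace Ω] (P : Measure Ω) [IsProbabilityMeasure P]
    (X : Θ → Ω → ℝ) (k : ℕ) (hk : 1 ≤ k)
    (F : Θ → ℝ → ℝ)
    (hF : ∀ (θ : Θ) (η : ℝ),
      F θ η = (∫ ω, max (η - X θ ω) 0 ^ (k - 1) ∂P) / (Nat.factorial (k - 1) : ℝ))
    (hcont : ∀ η : ℝ, Continuous fun θ => F θ η) :
    ∃ θs : Θ, ∀ θ : Θ, (∀ η : ℝ, F θ η ≤ F θs η) → ∀ η : ℝ, F θ η = F θs η := by
  classical
  -- the dominance relation: `r a b` means `b` dominates `a`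
  set r : Θ → Θ → Prop := fun a b => ∀ η, F b η ≤ F a η with hr
  have htrans : Transitive r := fun a b c hab hbc η => (hbc η).trans (hab η)
  haveI hrefl : IsRefl Θ r := ⟨fun a η => le_refl _⟩
  have hbdd : ∀ c : Set Θ, IsChain r c → ∃ ub, ∀ a ∈ c, r a ub := by
    intro c hc
    rcases c.eq_empty_or_nonempty with rfl | ⟨a0, ha0⟩
    · exact ⟨Classical.arbitrary Θ, by simp⟩
    · haveI : Nonempty c := ⟨⟨a0, ha0⟩⟩
      set Z : c → Set Θ := fun a => {b | ∀ η, F b η ≤ F a.1 η} with hZ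
      have hclosed : ∀ a, IsClosed (Z a) := by
        intro a
        have hZa : Z a = ⋂ η, {b | F b η ≤ F a.1 η} := by
          ext x; simp [hZ, Set.mem_iInter]
        rw [hZa]
        exact isClosed_iInter fun η => isClosed_le (hcont η) continuous_const
      have hne : ∀ a, (Z a).Nonempty := fun a => ⟨a.1, fun η => le_refl _⟩
      have hdir : Directed (· ⊇ ·) Z := by
        intro a b
        rcases hc.total a.2 b.2 with h | h
        · exact ⟨b, fun x hx η => (hx η).trans (h η), fun x hx => hx⟩
        · exact ⟨a, fun x hx => hx, fun x hx η => (hx η).trans (h η)⟩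
      obtain ⟨ub, hub⟩ := IsCompact.nonempty_iInter_of_directed_nonempty_isCompact_isClosed
        Z hdir hne (fun a => IsClosed.isCompact (hclosed a)) hclosed
      refine ⟨ub, fun a ha => ?_⟩
      exact Set.mem_iInter.1 hub ⟨a, ha⟩
  obtain ⟨m, hm⟩ := exists_maximal_of_chains_bounded hbdd (fun hab hbc => htrans hab hbc)
  refine ⟨m, fun θ hθ η => ?_⟩
  exact le_antisymm (hθ η) (hm θ hθ η)
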